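/- Under the hypotheses of the previous statement, if moreover α ≠ 0, then for every y₀ ∈ ℝ the function H(x,y) := x^{−αd}·G(x, x^α·y) extends to a real-analytic function on a neighbourhood of (0,y₀) and is y-regular of order at most d−1 at (0,y₀). -/

import Mathlib

open Filter
open scoped Topology NNReal ENNReal


variable {n : ℕ}

/-- projection onto first factor, as a map into the product. -/
noncomputable def pix (n : ℕ) : ((Fin n → ℝ) × ℝ) →L[ℝ] ((Fin n → ℝ) × ℝ) :=
  (ContinuousLinearMap.inl ℝ (Fin n → ℝ) ℝ).comp (ContinuousLinearMap.fst ℝ (Fin n → ℝ) ℝ)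

lemma pix_apply (v : (Fin n → ℝ) × ℝ) : pix n v = (v.1, 0) := rfl

lemma norm_pix_le : ‖pix n‖ ≤ 1 := by
  refine ContinuousLinearMap.opNorm_le_bound _ zero_le_one (fun v => ?_)
  rw [pix_apply, one_mul]
  have : ‖((v.1, (0:ℝ)) : (Fin n → ℝ) × ℝ)‖ = ‖v.1‖ := by
    rw [Prod.norm_def]
    simp
  rw [this]
  exact norm_fst_le v

/-- the vertical unit vector -/
def ee (n : ℕ) : (Fin n → ℝ) × ℝ := (0, 1)

lemma norm_ee : ‖ee n‖ = 1 := by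
  rw [ee, Prod.norm_def]
  simp

lemma norm_domDomCongr_le {k : ℕ} (σ : Equiv.Perm (Fin k))
    (g : ContinuousMultilinearMap ℝ (fun _ : Fin k => (Fin n → ℝ) × ℝ) ℝ) :
    ‖g.domDomCongr σ‖ ≤ ‖g‖ := by
  refine ContinuousMultilinearMap.opNorm_le_bound (norm_nonneg g) (fun v => ?_)
  rw [ContinuousMultilinearMap.domDomCongr_apply]
  calc ‖g fun i => v (σ i)‖ ≤ ‖g‖ * ∏ i, ‖v (σ i)‖ := g.le_opNorm _
    _ = ‖g‖ * ∏ i, ‖v i‖ := by rw [Equiv.prod_comp σ (fun i => ‖v i‖)]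

set_option maxHeartbeats 2000000 in
/-- Division of an analytic function of `(x, z) : (Fin n → ℝ) × ℝ` by `z`,
assuming it vanishes on `z = 0`. -/
lemma div_snd {f : (Fin n → ℝ) × ℝ → ℝ}
    (hf : AnalyticAt ℝ f 0) (h0 : ∀ᶠ x in 𝓝 (0 : Fin n → ℝ), f (x, 0) = 0) :
    ∃ g : (Fin n → ℝ) × ℝ → ℝ, AnalyticAt ℝ g 0 ∧
      ∀ᶠ w in 𝓝 (0 : (Fin n → ℝ) × ℝ), f w = w.2 * g w := by
  classical
  obtain ⟨p, r, hp⟩ := hf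
  set q : FormalMultilinearSeries ℝ ((Fin n → ℝ) × ℝ) ℝ := fun k =>
    ∑ i : Fin (k+1),
      ((((p (k+1)).compContinuousLinearMap
          (fun j => if (j : ℕ) ≤ (i : ℕ) then ContinuousLinearMap.id ℝ _ else pix n)).domDomCongr
          (Equiv.swap 0 i)).curryLeft) (ee n) with hqdef
  -- key diagonal evaluation
  have key : ∀ (k : ℕ) (w : (Fin n → ℝ) × ℝ),
      w.2 * (q k fun _ => w) = (p (k+1) fun _ => w) - (p (k+1) fun _ => ((w.1, 0) : (Fin n → ℝ) × ℝ)) := by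
    intro k w
    set b : (Fin n → ℝ) × ℝ := (w.1, 0) with hb
    have hcons : ∀ m : Fin (k+1),
        (Fin.cons (ee n) (fun _ : Fin k => w) : ∀ _ : Fin (k+1), (Fin n → ℝ) × ℝ) m
          = if m = 0 then ee n else w := by
      intro m
      refine Fin.cases ?_ (fun l => ?_) m
      · simp
      · simp [Fin.succ_ne_zero]
    have hterm : ∀ i : Fin (k+1),
        (((((p (k+1)).compContinuousLinearMap
            (fun j => if (j : ℕ) ≤ (i : ℕ) then ContinuousLinearMap.id ℝ _ else pix n)).domDomCongr
            (Equiv.swap 0 i)).curryLeft) (ee n)) (fun _ : Fin k => w)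
          = p (k+1) (fun j => if j = i then ee n else if (j : ℕ) ≤ (i : ℕ) then w else b) := by
      intro i
      rw [ContinuousMultilinearMap.curryLeft_apply, ContinuousMultilinearMap.domDomCongr_apply,
        ContinuousMultilinearMap.compContinuousLinearMap_apply]
      congr 1
      funext j
      rw [hcons (Equiv.swap 0 i j)]
      have hswap : (Equiv.swap 0 i j = 0) ↔ (j = i) := by
        constructor
        · intro h
          have := congrArg (Equiv.swap 0 i) h
          rwa [Equiv.swap_apply_self, Equiv.swap_apply_left] at this
        · intro h; rw [h, Equiv.swap_apply_right]
      by_cases hji : j = i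
      · rw [if_pos (hswap.2 hji), if_pos hji, if_pos (by rw [hji])]
        rfl
      · rw [if_neg (fun h => hji (hswap.1 h)), if_neg hji]
        by_cases hle : (j : ℕ) ≤ (i : ℕ)
        · rw [if_pos hle, if_pos hle]; rfl
        · rw [if_neg hle, if_neg hle]; rfl
    -- telescoping
    set F : ℕ → ℝ := fun m => p (k+1) (fun j : Fin (k+1) => if (j : ℕ) < m then w else b) with hF
    have hstep : ∀ i : Fin (k+1),
        w.2 * p (k+1) (fun j => if j = i then ee n else if (j : ℕ) ≤ (i : ℕ) then w else b)
          = F ((i : ℕ) + 1) - F (i : ℕ) := by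
      intro i
      set u : Fin (k+1) → (Fin n → ℝ) × ℝ := fun j => if (j : ℕ) < (i : ℕ) then w else b with hu
      have h1 : (fun j : Fin (k+1) => if (j : ℕ) < (i : ℕ) + 1 then w else b)
          = Function.update u i w := by
        funext j
        rw [Function.update_apply]
        by_cases hji : j = i
        · rw [if_pos hji, if_pos (by rw [hji]; omega)]
        · have hne : (j : ℕ) ≠ (i : ℕ) := fun h => hji (Fin.ext h)
          rw [if_neg hji, hu]
          exact if_congr (by omega) rfl rfl
      have h2 : (fun j : Fin (k+1) => if (j : ℕ) < (i : ℕ) then w else b)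
          = Function.update u i b := by
        funext j
        rw [Function.update_apply]
        by_cases hji : j = i
        · rw [if_pos hji, if_neg (by rw [hji]; omega)]
        · rw [if_neg hji]
      have h3 : w - b = w.2 • ee n := by
        rw [hb, ee]
        ext <;> simp
      have h4 : Function.update u i (ee n)
          = fun j => if j = i then ee n else if (j : ℕ) ≤ (i : ℕ) then w else b := by
        funext j
        rw [Function.update_apply]
        by_cases hji : j = i
        · rw [if_pos hji, if_pos hji]
        · have hne : (j : ℕ) ≠ (i : ℕ) := fun h => hji (Fin.ext h)
          rw [if_neg hji, if_neg hji, hu]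
          exact if_congr (by omega) rfl rfl
      calc w.2 * p (k+1) (fun j => if j = i then ee n else if (j : ℕ) ≤ (i : ℕ) then w else b)
          = w.2 * p (k+1) (Function.update u i (ee n)) := by rw [h4]
        _ = p (k+1) (Function.update u i (w.2 • ee n)) := by
            rw [ContinuousMultilinearMap.map_update_smul, smul_eq_mul]
        _ = p (k+1) (Function.update u i (w - b)) := by rw [h3]
        _ = p (k+1) (Function.update u i w) - p (k+1) (Function.update u i b) :=
            ContinuousMultilinearMap.map_update_sub _ _ _ _ _
        _ = F ((i : ℕ) + 1) - F (i : ℕ) := by rw [hF, ← h1, ← h2]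
    have hqapp : q k (fun _ : Fin k => w)
        = ∑ i : Fin (k+1), p (k+1) (fun j => if j = i then ee n else if (j : ℕ) ≤ (i : ℕ) then w else b) := by
      rw [hqdef]
      rw [ContinuousMultilinearMap.sum_apply]
      exact Finset.sum_congr rfl (fun i _ => hterm i)
    rw [hqapp, Finset.mul_sum]
    rw [Finset.sum_congr rfl (fun i _ => hstep i)]
    rw [Fin.sum_univ_eq_sum_range (fun m => F (m + 1) - F m) (k+1), Finset.sum_range_sub]
    have hFtop : F (k+1) = p (k+1) (fun _ => w) := by
      rw [hF]
      exact congrArg _ (funext fun j => if_pos j.isLt)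
    have hFbot : F 0 = p (k+1) (fun _ => b) := by
      rw [hF]
      exact congrArg _ (funext fun j => if_neg (Nat.not_lt_zero _))
    rw [hFtop, hFbot]
  -- norm bound on q
  have hqnorm : ∀ k, ‖q k‖ ≤ ((k:ℝ)+1) * ‖p (k+1)‖ := by
    intro k
    have hb : ∀ i : Fin (k+1),
        ‖((((p (k+1)).compContinuousLinearMap
          (fun j => if (j : ℕ) ≤ (i : ℕ) then ContinuousLinearMap.id ℝ _ else pix n)).domDomCongr
          (Equiv.swap 0 i)).curryLeft) (ee n)‖ ≤ ‖p (k+1)‖ := by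
      intro i
      set M := ((p (k+1)).compContinuousLinearMap
          (fun j => if (j : ℕ) ≤ (i : ℕ) then ContinuousLinearMap.id ℝ _ else pix n)).domDomCongr
          (Equiv.swap 0 i) with hM
      calc ‖M.curryLeft (ee n)‖ ≤ ‖M.curryLeft‖ * ‖ee n‖ := M.curryLeft.le_opNorm _
        _ = ‖M‖ := by rw [ContinuousMultilinearMap.curryLeft_norm, norm_ee, mul_one]
        _ ≤ ‖(p (k+1)).compContinuousLinearMap
            (fun j => if (j : ℕ) ≤ (i : ℕ) then ContinuousLinearMap.id ℝ _ else pix n)‖ :=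
          norm_domDomCongr_le _ _
        _ ≤ ‖p (k+1)‖ * ∏ j : Fin (k+1),
            ‖if (j : ℕ) ≤ (i : ℕ) then ContinuousLinearMap.id ℝ ((Fin n → ℝ) × ℝ) else pix n‖ :=
          ContinuousMultilinearMap.norm_compContinuousLinearMap_le _ _
        _ ≤ ‖p (k+1)‖ * 1 := by
          refine mul_le_mul_of_nonneg_left ?_ (norm_nonneg _)
          refine Finset.prod_le_one (fun j _ => norm_nonneg _) (fun j _ => ?_)
          by_cases hle : (j : ℕ) ≤ (i : ℕ)
          · rw [if_pos hle]; exact ContinuousLinearMap.norm_id_le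
          · rw [if_neg hle]; exact norm_pix_le
        _ = ‖p (k+1)‖ := mul_one _
    calc ‖q k‖ ≤ ∑ i : Fin (k+1), ‖((((p (k+1)).compContinuousLinearMap
          (fun j => if (j : ℕ) ≤ (i : ℕ) then ContinuousLinearMap.id ℝ _ else pix n)).domDomCongr
          (Equiv.swap 0 i)).curryLeft) (ee n)‖ := by
          rw [hqdef]; exact norm_sum_le _ _
      _ ≤ ∑ _i : Fin (k+1), ‖p (k+1)‖ := Finset.sum_le_sum (fun i _ => hb i)
      _ = ((k:ℝ)+1) * ‖p (k+1)‖ := by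
          rw [Finset.sum_const, Finset.card_univ, Fintype.card_fin, nsmul_eq_mul]
          push_cast
          ring
  -- positive radius for q
  obtain ⟨r', hr'pos, hr'lt⟩ := ENNReal.lt_iff_exists_nnreal_btwn.1 hp.r_pos
  have hr'rad : (r' : ℝ≥0∞) < p.radius := lt_of_lt_of_le hr'lt hp.r_le
  have hr'0 : 0 < r' := by
    have := hr'pos
    simpa using this
  have hsp : Summable fun m => ‖p m‖ * (r' : ℝ) ^ m := p.summable_norm_mul_pow hr'rad
  have hsp1 : Summable fun k => ‖p (k+1)‖ * (r' : ℝ) ^ (k+1) :=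
    (summable_nat_add_iff 1).2 hsp
  have hsq : Summable fun k => ‖q k‖ * ((r' / 2 : ℝ≥0) : ℝ) ^ k := by
    have hr'R : (0:ℝ) < (r' : ℝ) := hr'0
    refine Summable.of_nonneg_of_le
      (fun k => mul_nonneg (norm_nonneg _) (pow_nonneg (by positivity) _))
      (fun k => ?_) ((hsp1.mul_left (2 / (r' : ℝ))))
    have hcoe : ((r' / 2 : ℝ≥0) : ℝ) = (r' : ℝ) / 2 := by
      push_cast
      ring
    rw [hcoe]
    have h2k : ((k:ℝ)+1) * (1/2 : ℝ) ^ k ≤ 2 := by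
      have h1 : (k:ℝ) + 1 ≤ 2 ^ k * 2 := by
        have h0 := Nat.lt_two_pow_self (n := k)
        have hlt : (k : ℝ) < 2 ^ k := by exact_mod_cast h0
        have hge : (1:ℝ) ≤ 2 ^ k := one_le_pow₀ (by norm_num)
        linarith
      have h2 : (0:ℝ) < 2 ^ k := by positivity
      rw [one_div, inv_pow]
      rw [mul_inv_le_iff₀ h2]
      linarith
    calc ‖q k‖ * ((r' : ℝ)/2) ^ k ≤ (((k:ℝ)+1) * ‖p (k+1)‖) * ((r' : ℝ)/2) ^ k := by
          refine mul_le_mul_of_nonneg_right (hqnorm k) (by positivity)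
      _ = (((k:ℝ)+1) * (1/2:ℝ)^k) * (‖p (k+1)‖ * (r' : ℝ) ^ k) := by
          rw [div_pow, div_pow]
          ring
      _ ≤ 2 * (‖p (k+1)‖ * (r' : ℝ) ^ k) := by
          refine mul_le_mul_of_nonneg_right h2k (by positivity)
      _ = 2 / (r' : ℝ) * (‖p (k+1)‖ * (r' : ℝ) ^ (k+1)) := by
          field_simp
          ring
  have hqrad : 0 < q.radius := by
    refine lt_of_lt_of_le ?_ (q.le_radius_of_summable hsq)
    have : (0:ℝ≥0) < r' / 2 := by positivity
    exact_mod_cast this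
  have hgball : HasFPowerSeriesOnBall q.sum q 0 q.radius := q.hasFPowerSeriesOnBall hqrad
  refine ⟨q.sum, hgball.analyticAt, ?_⟩
  -- the eventual identity
  have hmem1 : {w : (Fin n → ℝ) × ℝ | w ∈ Metric.eball (0 : (Fin n → ℝ) × ℝ) r} ∈
      𝓝 (0 : (Fin n → ℝ) × ℝ) := Metric.eball_mem_nhds _ hp.r_pos
  have hmem2 : {w : (Fin n → ℝ) × ℝ | w ∈ Metric.eball (0 : (Fin n → ℝ) × ℝ) q.radius} ∈
      𝓝 (0 : (Fin n → ℝ) × ℝ) := Metric.eball_mem_nhds _ hqrad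
  have hmem3 : {w : (Fin n → ℝ) × ℝ | f (w.1, 0) = 0} ∈ 𝓝 (0 : (Fin n → ℝ) × ℝ) := by
    have hcont : ContinuousAt (fun w : (Fin n → ℝ) × ℝ => w.1) 0 := continuous_fst.continuousAt
    have : Filter.Tendsto (fun w : (Fin n → ℝ) × ℝ => w.1) (𝓝 0) (𝓝 0) := by
      simpa using hcont.tendsto
    exact this.eventually h0
  filter_upwards [hmem1, hmem2, hmem3] with w hw1 hw2 hw3
  have hwb : ((w.1, 0) : (Fin n → ℝ) × ℝ) ∈ Metric.eball (0 : (Fin n → ℝ) × ℝ) r := by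
    rw [mem_emetric_ball_zero_iff] at hw1 ⊢
    refine lt_of_le_of_lt ?_ hw1
    have : ‖((w.1, 0) : (Fin n → ℝ) × ℝ)‖ ≤ ‖w‖ := by
      rw [Prod.norm_def, Prod.norm_def]
      simp only [norm_zero]
      exact max_le (le_max_left _ _) (le_trans (norm_nonneg _) (le_max_left _ _))
    rw [← ofReal_norm, ← ofReal_norm]
    exact ENNReal.ofReal_le_ofReal this
  have hsf : HasSum (fun m => p m fun _ => w) (f w) := by
    have := hp.hasSum hw1
    rwa [zero_add] at this
  have hsf0 : HasSum (fun m => p m fun _ => ((w.1, 0) : (Fin n → ℝ) × ℝ)) 0 := by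
    have := hp.hasSum hwb
    rwa [zero_add, hw3] at this
  have hsg : HasSum (fun k => q k fun _ => w) (q.sum w) := by
    have := hgball.hasSum hw2
    rwa [zero_add] at this
  have hsg' : HasSum (fun k => w.2 * (q k fun _ => w)) (w.2 * q.sum w) := hsg.mul_left w.2
  have h1 : HasSum (fun k => p (k+1) fun _ => w)
      (f w - ∑ i ∈ Finset.range 1, p i fun _ => w) := (hasSum_nat_add_iff' 1).2 hsf
  have h2 : HasSum (fun k => p (k+1) fun _ => ((w.1, 0) : (Fin n → ℝ) × ℝ))
      (0 - ∑ i ∈ Finset.range 1, p i fun _ => ((w.1, 0) : (Fin n → ℝ) × ℝ)) :=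
    (hasSum_nat_add_iff' 1).2 hsf0
  have hz : (p 0 fun _ => w) = (p 0 fun _ => ((w.1, 0) : (Fin n → ℝ) × ℝ)) := by
    congr 1
    funext i
    exact i.elim0
  have h3 : HasSum (fun k => (p (k+1) fun _ => w) -
      (p (k+1) fun _ => ((w.1, 0) : (Fin n → ℝ) × ℝ))) (f w) := by
    have := h1.sub h2
    simp only [Finset.sum_range_one] at this
    rw [hz] at this
    convert this using 1
    · rfl
    ring
  have heq : (fun k => w.2 * (q k fun _ => w))
      = fun k => (p (k+1) fun _ => w) - (p (k+1) fun _ => ((w.1, 0) : (Fin n → ℝ) × ℝ)) :=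
    funext fun k => key k w
  rw [heq] at hsg'
  exact h3.unique hsg'

lemma analyticAt_deriv {h : ℝ → ℝ} {t : ℝ} (hh : AnalyticAt ℝ h t) :
    AnalyticAt ℝ (deriv h) t := by
  have hopen : IsOpen {y : ℝ | AnalyticAt ℝ h y} := isOpen_analyticAt ℝ h
  have : AnalyticOnNhd ℝ h {y : ℝ | AnalyticAt ℝ h y} := fun y hy => hy
  exact this.deriv t hh

lemma analyticAt_slice {n : ℕ} {g : (Fin n → ℝ) × ℝ → ℝ} {x : Fin n → ℝ} {t₀ : ℝ}
    (hg : AnalyticAt ℝ g (x, t₀)) : AnalyticAt ℝ (fun t => g (x, t)) t₀ :=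
  hg.comp (analyticAt_const.prod analyticAt_id)

lemma iteratedDeriv_pow_mul : ∀ (j : ℕ) (h : ℝ → ℝ), AnalyticAt ℝ h 0 →
    iteratedDeriv j (fun t => t ^ j * h t) 0 = (j.factorial : ℝ) * h 0 := by
  intro j
  induction j with
  | zero => intro h _; simp
  | succ j ih =>
    intro h hh
    rw [iteratedDeriv_succ']
    have hd : deriv (fun t => t ^ (j+1) * h t) =ᶠ[𝓝 (0:ℝ)]
        (fun t => t ^ j * (((j:ℝ)+1) * h t + t * deriv h t)) := by
      filter_upwards [hh.eventually_analyticAt] with t ht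
      rw [deriv_fun_mul (differentiableAt_pow _) ht.differentiableAt, deriv_pow_field]
      push_cast
      ring
    rw [Filter.EventuallyEq.iteratedDeriv_eq j hd]
    have hnew : AnalyticAt ℝ (fun t => ((j:ℝ)+1) * h t + t * deriv h t) 0 :=
      (analyticAt_const.mul hh).add (analyticAt_id.mul (analyticAt_deriv hh))
    rw [ih _ hnew]
    simp only [deriv, Nat.factorial_succ]
    push_cast
    ring
  
lemma iteratedDeriv_polyeval (m : ℕ) : ∀ (Q : Polynomial ℝ) (y : ℝ),
    iteratedDeriv m (fun t => Q.eval t) y = (Polynomial.derivative^[m] Q).eval y := by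
  induction m with
  | zero => intro Q y; simp
  | succ m ih =>
    intro Q y
    rw [iteratedDeriv_succ']
    have : deriv (fun t => Q.eval t) = fun t => (Polynomial.derivative Q).eval t := by
      funext t
      exact Polynomial.deriv Q
    rw [this, ih, Function.iterate_succ_apply]

lemma iteratedDeriv_sum_pow (b : ℕ → ℝ) (D m : ℕ) :
    iteratedDeriv m (fun t : ℝ => ∑ i ∈ Finset.range D, b i * t ^ i) 0
      = if m < D then (m.factorial : ℝ) * b m else 0 := by
  classical
  set Q : Polynomial ℝ := ∑ i ∈ Finset.range D, Polynomial.C (b i) * Polynomial.X ^ i with hQ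
  have hfun : (fun t : ℝ => ∑ i ∈ Finset.range D, b i * t ^ i) = fun t => Q.eval t := by
    funext t
    rw [hQ, Polynomial.eval_finset_sum]
    simp
  have hcoeff : Q.coeff m = if m < D then b m else 0 := by
    rw [hQ, Polynomial.finset_sum_coeff]
    simp only [Polynomial.coeff_C_mul, Polynomial.coeff_X_pow, mul_ite, mul_one, mul_zero]
    rw [Finset.sum_ite_eq (Finset.range D) m b]
    simp [Finset.mem_range]
  rw [hfun, iteratedDeriv_polyeval, ← Polynomial.coeff_zero_eq_eval_zero,
    Polynomial.coeff_iterate_derivative, zero_add, Nat.descFactorial_self, hcoeff]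
  by_cases hm : m < D
  · rw [if_pos hm, if_pos hm, nsmul_eq_mul]
  · rw [if_neg hm, if_neg hm, smul_zero]

lemma iteratedDeriv_sub_analytic {f g : ℝ → ℝ} {m : ℕ} (hf : AnalyticAt ℝ f 0)
    (hg : AnalyticAt ℝ g 0) :
    iteratedDeriv m (fun t => f t - g t) 0 = iteratedDeriv m f 0 - iteratedDeriv m g 0 := by
  set s : Set ℝ := {y | AnalyticAt ℝ f y} ∩ {y | AnalyticAt ℝ g y} with hs
  have hso : IsOpen s := (isOpen_analyticAt ℝ f).inter (isOpen_analyticAt ℝ g)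
  have h0s : (0:ℝ) ∈ s := ⟨hf, hg⟩
  have hfa : AnalyticOnNhd ℝ f s := fun y hy => hy.1
  have hga : AnalyticOnNhd ℝ g s := fun y hy => hy.2
  have hfc : ContDiffOn ℝ (m : ℕ∞) f s := hfa.contDiffOn hso.uniqueDiffOn
  have hgc : ContDiffOn ℝ (m : ℕ∞) g s := hga.contDiffOn hso.uniqueDiffOn
  have hsub := iteratedDerivWithin_sub h0s hso.uniqueDiffOn (hfc 0 h0s) (hgc 0 h0s)
  have hopen : ∀ (F : ℝ → ℝ), iteratedDerivWithin m F s 0 = iteratedDeriv m F 0 := by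
    intro F
    rw [iteratedDerivWithin, iteratedDeriv, iteratedFDerivWithin_of_isOpen m hso h0s]
  have heq : (fun t => f t - g t) = f - g := rfl
  rw [heq, ← hopen f, ← hopen g, ← hopen (f - g), hsub]

lemma div_snd_pow {n : ℕ} (j : ℕ) :
    ∀ f : (Fin n → ℝ) × ℝ → ℝ, AnalyticAt ℝ f 0 →
    (∀ m < j, ∀ᶠ x in 𝓝 (0 : Fin n → ℝ), iteratedDeriv m (fun t => f (x, t)) 0 = 0) →
    ∃ g : (Fin n → ℝ) × ℝ → ℝ, AnalyticAt ℝ g 0 ∧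
      ∀ᶠ w in 𝓝 (0 : (Fin n → ℝ) × ℝ), f w = w.2 ^ j * g w := by
  induction j with
  | zero =>
    intro f hf _
    exact ⟨f, hf, by filter_upwards with w; rw [pow_zero, one_mul]⟩
  | succ j ih =>
    intro f hf h0
    obtain ⟨g, hg, hfg⟩ := ih f hf (fun m hm => h0 m (Nat.lt_succ_of_lt hm))
    obtain ⟨ε, hε, hball⟩ := Metric.eventually_nhds_iff.1 (hfg.and hg.eventually_analyticAt)
    have hg0 : ∀ᶠ x in 𝓝 (0 : Fin n → ℝ), g (x, 0) = 0 := by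
      have hxball : ∀ᶠ x in 𝓝 (0 : Fin n → ℝ), ‖x‖ < ε := by
        filter_upwards [Metric.ball_mem_nhds (0 : Fin n → ℝ) hε] with x hx
        simpa [dist_zero_right] using hx
      filter_upwards [hxball, h0 j (Nat.lt_succ_self j)] with x hx hder
      have hmem : ∀ t : ℝ, |t| < ε → dist ((x, t) : (Fin n → ℝ) × ℝ) 0 < ε := by
        intro t ht
        rw [dist_zero_right, Prod.norm_def]
        exact max_lt hx (by simpa using ht)
      have hslice : ∀ᶠ t in 𝓝 (0:ℝ), f (x, t) = t ^ j * g (x, t) := by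
        have hts : ∀ᶠ t in 𝓝 (0:ℝ), |t| < ε := by
          filter_upwards [Metric.ball_mem_nhds (0:ℝ) hε] with t ht
          simpa [Real.dist_eq] using ht
        filter_upwards [hts] with t ht
        exact (hball (hmem t ht)).1
      have hganal : AnalyticAt ℝ (fun t => g (x, t)) 0 := by
        refine analyticAt_slice ?_
        refine (hball ?_).2
        rw [dist_zero_right, Prod.norm_def]
        exact max_lt hx (by simpa using hε)
      rw [Filter.EventuallyEq.iteratedDeriv_eq j hslice,
        iteratedDeriv_pow_mul j _ hganal] at hder
      have hfac : (j.factorial : ℝ) ≠ 0 := Nat.cast_ne_zero.2 (Nat.factorial_ne_zero j)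
      exact (mul_eq_zero.1 hder).resolve_left hfac
    obtain ⟨g', hg', hgg'⟩ := div_snd hg hg0
    refine ⟨g', hg', ?_⟩
    filter_upwards [hfg, hgg'] with w h1 h2
    rw [h1, h2, pow_succ]
    ring


/-- The `i`-th partial derivative of `G(x,y)` with respect to `y`. -/
noncomputable def yDeriv {n : ℕ} (G : (Fin n → ℝ) × ℝ → ℝ) (i : ℕ)
    (x : Fin n → ℝ) (y : ℝ) : ℝ :=
  iteratedDeriv i (fun t => G (x, t)) y

/-- `G` is `y`-regular of order `k` at `(x₀, y₀)`. -/
def YRegular {n : ℕ} (G : (Fin n → ℝ) × ℝ → ℝ) (k : ℕ)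
    (x₀ : Fin n → ℝ) (y₀ : ℝ) : Prop :=
  yDeriv G k x₀ y₀ ≠ 0 ∧ ∀ j < k, yDeriv G j x₀ y₀ = 0

set_option maxHeartbeats 1000000 in
/-- Lemma 4.4 (second part, analytic case): under the same hypotheses, if moreover
`α ≠ 0`, then for every `y₀ ∈ ℝ` the function `H(x,y) = x^{-αd}·G(x, x^α y)` extends to
an analytic function near `(0, y₀)` which is `y`-regular of order at most `d-1` there. -/
theorem lemma_machine_away_from_zero
    (n : ℕ) (U : Set ((Fin n → ℝ) × ℝ)) (hU : U ∈ nhds ((0, 0) : (Fin n → ℝ) × ℝ))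
    (G : (Fin n → ℝ) × ℝ → ℝ) (hG : AnalyticOnNhd ℝ G U)
    (d : ℕ) (hd : 1 < d) (hreg : YRegular G d 0 0)
    (α : Fin n → ℕ) (hα : α ≠ 0)
    (hcd1 : ∀ᶠ x in nhds (0 : Fin n → ℝ), yDeriv G (d - 1) x 0 = 0)
    (cstar : ℕ → (Fin n → ℝ) → ℝ)
    (hcstar : ∀ i < d - 1, ∀ᶠ x in nhds (0 : Fin n → ℝ),
      AnalyticAt ℝ (cstar i) x ∧
        yDeriv G i x 0 = (∏ j, x j ^ ((d - i) * α j)) * cstar i x)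
    (k : ℕ) (hk : k < d - 1) (hk0 : cstar k 0 ≠ 0) :
    ∀ y₀ : ℝ, ∃ V ∈ nhds ((0, y₀) : (Fin n → ℝ) × ℝ), ∃ H : (Fin n → ℝ) × ℝ → ℝ,
      AnalyticOnNhd ℝ H V ∧
      (∀ p ∈ V, (∏ j, p.1 j ^ (d * α j)) * H p = G (p.1, (∏ j, p.1 j ^ α j) * p.2)) ∧
      ∃ k' ≤ d - 1, YRegular H k' 0 y₀ := by
  classical
  intro y₀
  have hG0 : AnalyticAt ℝ G 0 := hG _ (mem_of_mem_nhds hU)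
  obtain ⟨j₀, hj₀⟩ : ∃ j, α j ≠ 0 := by
    by_contra h
    push_neg at h
    exact hα (funext h)
  have hprod0 : (∏ j, (0 : Fin n → ℝ) j ^ (α j)) = 0 :=
    Finset.prod_eq_zero (Finset.mem_univ j₀) (by simp [zero_pow hj₀])
  -- combined eventual facts about cstar
  have hcs : ∀ᶠ x in 𝓝 (0 : Fin n → ℝ), ∀ i ∈ Finset.range (d - 1),
      AnalyticAt ℝ (cstar i) x ∧
        yDeriv G i x 0 = (∏ j, x j ^ ((d - i) * α j)) * cstar i x :=
    (Finset.range (d - 1)).eventually_all.2 (fun i hi => hcstar i (Finset.mem_range.1 hi))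
  have hGx : ∀ᶠ x in 𝓝 (0 : Fin n → ℝ), AnalyticAt ℝ G (x, 0) := by
    have hcont : Continuous (fun x : Fin n → ℝ => ((x, 0) : (Fin n → ℝ) × ℝ)) :=
      continuous_id.prodMk continuous_const
    have ht : Filter.Tendsto (fun x : Fin n → ℝ => ((x, 0) : (Fin n → ℝ) × ℝ))
        (𝓝 0) (𝓝 0) := by
      exact (hcont.continuousAt (x := (0 : Fin n → ℝ))).tendsto
    exact ht.eventually hG0.eventually_analyticAt
  -- the Taylor part
  set T : (Fin n → ℝ) × ℝ → ℝ := fun w =>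
    ∑ i ∈ Finset.range (d - 1),
      (∏ j, w.1 j ^ ((d - i) * α j)) * cstar i w.1 * w.2 ^ i / (i.factorial : ℝ) with hT
  have hTslice : ∀ x : Fin n → ℝ, (fun t : ℝ => T (x, t)) =
      fun t => ∑ i ∈ Finset.range (d - 1),
        ((∏ j, x j ^ ((d - i) * α j)) * cstar i x / (i.factorial : ℝ)) * t ^ i := by
    intro x
    funext t
    rw [hT]
    exact Finset.sum_congr rfl fun i _ => by ring
  have hTanal : ∀ w : (Fin n → ℝ) × ℝ, (∀ i ∈ Finset.range (d - 1), AnalyticAt ℝ (cstar i) w.1) →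
      AnalyticAt ℝ T w := by
    intro w hw
    rw [hT]
    refine Finset.analyticAt_fun_sum _ fun i hi => ?_
    have h1 : AnalyticAt ℝ (fun v : (Fin n → ℝ) × ℝ => ∏ j, v.1 j ^ ((d - i) * α j)) w :=
      Finset.analyticAt_fun_prod _ fun j _ =>
        (((ContinuousLinearMap.proj j).comp
          (ContinuousLinearMap.fst ℝ (Fin n → ℝ) ℝ)).analyticAt w).pow _
    have h2 : AnalyticAt ℝ (fun v : (Fin n → ℝ) × ℝ => cstar i v.1) w :=
      (hw i hi).comp analyticAt_fst
    exact ((h1.mul h2).mul (analyticAt_snd.pow i)).div analyticAt_const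
      (Nat.cast_ne_zero.2 (Nat.factorial_ne_zero i))
  set f₀ : (Fin n → ℝ) × ℝ → ℝ := fun w => G w - T w with hf₀def
  have hf₀ : AnalyticAt ℝ f₀ 0 := by
    refine hG0.sub (hTanal 0 fun i hi => ?_)
    exact ((hcstar i (Finset.mem_range.1 hi)).self_of_nhds).1
  -- vanishing of the first d y-derivatives of f₀ near 0
  have h0 : ∀ m < d, ∀ᶠ x in 𝓝 (0 : Fin n → ℝ), iteratedDeriv m (fun t => f₀ (x, t)) 0 = 0 := by
    intro m hm
    filter_upwards [hcs, hGx, hcd1] with x hx hGx' hcd1'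
    have hGanal : AnalyticAt ℝ (fun t => G (x, t)) 0 := analyticAt_slice hGx'
    have hTanal' : AnalyticAt ℝ (fun t => T (x, t)) 0 := by
      rw [hTslice x]
      exact Finset.analyticAt_fun_sum _ fun i _ => analyticAt_const.mul (analyticAt_id.pow i)
    have heq : (fun t => f₀ (x, t)) = fun t => G (x, t) - T (x, t) := rfl
    rw [heq, iteratedDeriv_sub_analytic hGanal hTanal', hTslice x, iteratedDeriv_sum_pow]
    by_cases hmd : m < d - 1
    · rw [if_pos hmd]
      have h2 := (hx m (Finset.mem_range.2 hmd)).2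
      rw [yDeriv] at h2
      rw [h2]
      have hfac : (m.factorial : ℝ) ≠ 0 := Nat.cast_ne_zero.2 (Nat.factorial_ne_zero m)
      field_simp
      ring
    · rw [if_neg hmd, sub_zero]
      have hmd1 : m = d - 1 := by omega
      rw [yDeriv] at hcd1'
      rw [hmd1]
      exact hcd1'
  obtain ⟨W, hW, hfW⟩ := div_snd_pow d f₀ hf₀ h0
  -- the neighbourhoods
  obtain ⟨ε, hε, hball⟩ := Metric.eventually_nhds_iff.1 (hfW.and hW.eventually_analyticAt)
  obtain ⟨ε₁, hε₁, hball₁⟩ := Metric.eventually_nhds_iff.1 hcs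
  set ψ : (Fin n → ℝ) × ℝ → (Fin n → ℝ) × ℝ := fun w => (w.1, (∏ j, w.1 j ^ α j) * w.2)
    with hψ
  have hψanal : ∀ w, AnalyticAt ℝ ψ w := by
    intro w
    refine analyticAt_fst.prod (AnalyticAt.mul ?_ analyticAt_snd)
    exact Finset.analyticAt_fun_prod _ fun j _ =>
      (((ContinuousLinearMap.proj j).comp
        (ContinuousLinearMap.fst ℝ (Fin n → ℝ) ℝ)).analyticAt w).pow _
  have hψcont : Continuous ψ := by
    rw [hψ]
    fun_prop
  set V : Set ((Fin n → ℝ) × ℝ) :=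
    {w | dist w.1 0 < ε₁ ∧ dist (ψ w) 0 < ε} with hV
  have hψx : ∀ t : ℝ, ψ ((0 : Fin n → ℝ), t) = ((0 : Fin n → ℝ), (0 : ℝ)) := by
    intro t
    have h2 : (ψ ((0 : Fin n → ℝ), t)).2 = 0 := by
      show (∏ j, (0 : Fin n → ℝ) j ^ α j) * t = 0
      rw [hprod0, zero_mul]
    have h1 : (ψ ((0 : Fin n → ℝ), t)).1 = 0 := rfl
    exact Prod.ext h1 h2
  have hVnhds : V ∈ 𝓝 ((0, y₀) : (Fin n → ℝ) × ℝ) := by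
    have h1 : (fun w : (Fin n → ℝ) × ℝ => w.1) ⁻¹' (Metric.ball 0 ε₁)
        ∈ 𝓝 ((0, y₀) : (Fin n → ℝ) × ℝ) :=
      ContinuousAt.preimage_mem_nhds continuous_fst.continuousAt
        (Metric.ball_mem_nhds (0 : Fin n → ℝ) hε₁)
    have h2 : ψ ⁻¹' (Metric.ball 0 ε) ∈ 𝓝 ((0, y₀) : (Fin n → ℝ) × ℝ) := by
      refine ContinuousAt.preimage_mem_nhds hψcont.continuousAt ?_
      rw [show ((0, y₀) : (Fin n → ℝ) × ℝ) = ((0 : Fin n → ℝ), y₀) from rfl, hψx y₀]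
      exact Metric.ball_mem_nhds _ hε
    exact Filter.inter_mem h1 h2
  -- the function H
  set H : (Fin n → ℝ) × ℝ → ℝ := fun w =>
    (∑ i ∈ Finset.range (d - 1), cstar i w.1 * w.2 ^ i / (i.factorial : ℝ))
      + w.2 ^ d * W (ψ w) with hH
  refine ⟨V, hVnhds, H, ?_, ?_, ?_⟩
  · -- analyticity of H on V
    intro w hw
    rw [hH]
    have hcw : ∀ i ∈ Finset.range (d - 1), AnalyticAt ℝ (cstar i) w.1 :=
      fun i hi => ((hball₁ hw.1) i hi).1
    refine AnalyticAt.add ?_ ?_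
    · refine Finset.analyticAt_fun_sum _ fun i hi => ?_
      exact (((hcw i hi).comp analyticAt_fst).mul (analyticAt_snd.pow i)).div analyticAt_const
        (Nat.cast_ne_zero.2 (Nat.factorial_ne_zero i))
    · exact (analyticAt_snd.pow d).mul (((hball hw.2).2).comp (hψanal w))
  · -- the identity on V
    intro w hw
    have hGw : G (ψ w) = T (ψ w) + ((∏ j, w.1 j ^ α j) * w.2) ^ d * W (ψ w) := by
      have h1 := (hball hw.2).1
      rw [hf₀def] at h1
      have h2 : (ψ w).2 = (∏ j, w.1 j ^ α j) * w.2 := rfl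
      rw [h2] at h1
      exact sub_eq_iff_eq_add'.mp h1
    have hgoal : G (w.1, (∏ j, w.1 j ^ α j) * w.2) = G (ψ w) := rfl
    rw [hgoal, hGw, hH]
    have hTpsi : T (ψ w) = (∏ j, w.1 j ^ (d * α j)) *
        (∑ i ∈ Finset.range (d - 1), cstar i w.1 * w.2 ^ i / (i.factorial : ℝ)) := by
      rw [hT, Finset.mul_sum]
      refine Finset.sum_congr rfl fun i hi => ?_
      have hid : i ≤ d := by
        have := Finset.mem_range.1 hi
        omega
      have hpow : ∀ j : Fin n, w.1 j ^ ((d - i) * α j) * (w.1 j ^ α j) ^ i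
          = w.1 j ^ (d * α j) := by
        intro j
        rw [← pow_mul, ← pow_add]
        congr 1
        have : d - i + i = d := Nat.sub_add_cancel hid
        calc (d - i) * α j + α j * i = ((d - i) + i) * α j := by ring
          _ = d * α j := by rw [this]
      have hψ1 : (ψ w).1 = w.1 := rfl
      have hψ2 : (ψ w).2 = (∏ j, w.1 j ^ α j) * w.2 := rfl
      rw [hψ1, hψ2, mul_pow, ← Finset.prod_pow]
      have hkey2 : (∏ j, w.1 j ^ ((d - i) * α j)) * (∏ j, (w.1 j ^ α j) ^ i)
          = ∏ j, w.1 j ^ (d * α j) := by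
        rw [← Finset.prod_mul_distrib]
        exact Finset.prod_congr rfl fun j _ => hpow j
      calc (∏ j, w.1 j ^ ((d - i) * α j)) * cstar i w.1
            * ((∏ j, (w.1 j ^ α j) ^ i) * w.2 ^ i) / (i.factorial : ℝ)
          = ((∏ j, w.1 j ^ ((d - i) * α j)) * (∏ j, (w.1 j ^ α j) ^ i))
            * (cstar i w.1 * w.2 ^ i) / (i.factorial : ℝ) := by ring
        _ = (∏ j, w.1 j ^ (d * α j)) * (cstar i w.1 * w.2 ^ i) / (i.factorial : ℝ) := by
            rw [hkey2]
        _ = (∏ j, w.1 j ^ (d * α j)) * (cstar i w.1 * w.2 ^ i / (i.factorial : ℝ)) := by ring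
    rw [hTpsi]
    have hkey3 : ((∏ j, w.1 j ^ α j)) ^ d = ∏ j, w.1 j ^ (d * α j) := by
      rw [← Finset.prod_pow]
      exact Finset.prod_congr rfl fun j _ => by rw [← pow_mul, mul_comm]
    rw [mul_pow, hkey3]
    ring
  · -- y-regularity at (0, y₀)
    have hT0 : ∀ t : ℝ, T ((0 : Fin n → ℝ), t) = 0 := by
      intro t
      rw [hT]
      refine Finset.sum_eq_zero fun i hi => ?_
      have hlt : i < d - 1 := Finset.mem_range.1 hi
      have hz : (∏ j, (((0 : Fin n → ℝ), t) : (Fin n → ℝ) × ℝ).1 j ^ ((d - i) * α j)) = 0 :=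
        Finset.prod_eq_zero (Finset.mem_univ j₀)
          (by simp [zero_pow (Nat.mul_ne_zero (show d - i ≠ 0 by omega) hj₀)])
      rw [hz, zero_mul, zero_mul, zero_div]
    have hslice0 : ∀ᶠ t in 𝓝 (0 : ℝ), f₀ ((0 : Fin n → ℝ), t)
        = t ^ d * W ((0 : Fin n → ℝ), t) := by
      have hcont0 : Filter.Tendsto (fun t : ℝ => (((0 : Fin n → ℝ), t) : (Fin n → ℝ) × ℝ))
          (𝓝 0) (𝓝 0) := by
        have hc : Continuous (fun t : ℝ => (((0 : Fin n → ℝ), t) : (Fin n → ℝ) × ℝ)) := by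
          fun_prop
        exact (hc.continuousAt (x := (0 : ℝ))).tendsto
      filter_upwards [hcont0.eventually hfW] with t ht
      exact ht
    have hWanal0 : AnalyticAt ℝ (fun t => W ((0 : Fin n → ℝ), t)) 0 := analyticAt_slice hW
    set wd : ℝ := W ((0 : Fin n → ℝ), (0 : ℝ)) with hwd
    have hcd : yDeriv G d 0 0 = (d.factorial : ℝ) * wd := by
      have hGfun : (fun t => G ((0 : Fin n → ℝ), t)) = fun t => f₀ ((0 : Fin n → ℝ), t) := by
        funext t
        rw [hf₀def]
        simp only
        rw [hT0 t, sub_zero]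
      rw [yDeriv, hGfun, Filter.EventuallyEq.iteratedDeriv_eq d hslice0,
        iteratedDeriv_pow_mul d _ hWanal0]
    have hwd0 : wd ≠ 0 := by
      intro hzero
      exact hreg.1 (by rw [hcd, hzero, mul_zero])
    set P : Polynomial ℝ := (∑ i ∈ Finset.range (d - 1),
        Polynomial.C (cstar i 0 / (i.factorial : ℝ)) * Polynomial.X ^ i)
        + Polynomial.C wd * Polynomial.X ^ d with hP
    have hHslice : (fun t => H ((0 : Fin n → ℝ), t)) = fun t => P.eval t := by
      funext t
      show (∑ i ∈ Finset.range (d - 1), cstar i (0 : Fin n → ℝ) * t ^ i / (i.factorial : ℝ))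
          + t ^ d * W (ψ ((0 : Fin n → ℝ), t)) = P.eval t
      rw [hψx t, ← hwd, hP]
      rw [Polynomial.eval_add, Polynomial.eval_finset_sum]
      simp only [Polynomial.eval_mul, Polynomial.eval_pow, Polynomial.eval_C, Polynomial.eval_X]
      congr 1
      · exact Finset.sum_congr rfl fun i _ => by ring
      · ring
    have hyH : ∀ m, yDeriv H m 0 y₀ = (Polynomial.derivative^[m] P).eval y₀ := by
      intro m
      rw [yDeriv]
      have : (fun t => H ((0 : Fin n → ℝ), t)) = fun t => P.eval t := hHslice
      rw [show (fun t => H (0, t)) = fun t => H ((0 : Fin n → ℝ), t) from rfl, this,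
        iteratedDeriv_polyeval]
    have hcoeff : ∀ m, P.coeff m =
        (if m < d - 1 then cstar m 0 / (m.factorial : ℝ) else 0)
          + (if m = d then wd else 0) := by
      intro m
      rw [hP, Polynomial.coeff_add, Polynomial.finset_sum_coeff]
      congr 1
      · simp only [Polynomial.coeff_C_mul, Polynomial.coeff_X_pow, mul_ite, mul_one, mul_zero]
        rw [Finset.sum_ite_eq (Finset.range (d - 1)) m _]
        simp [Finset.mem_range]
      · rw [Polynomial.coeff_C_mul, Polynomial.coeff_X_pow]
        simp [eq_comm]
    have hdeg : P.natDegree ≤ d := by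
      rw [hP]
      refine le_trans (Polynomial.natDegree_add_le _ _) (max_le ?_ ?_)
      · refine Polynomial.natDegree_sum_le_of_forall_le _ _ fun i hi => ?_
        refine le_trans (Polynomial.natDegree_C_mul_le _ _) ?_
        rw [Polynomial.natDegree_X_pow]
        have := Finset.mem_range.1 hi
        omega
      · refine le_trans (Polynomial.natDegree_C_mul_le _ _) ?_
        rw [Polynomial.natDegree_X_pow]
    have hexists : ∃ m, m ≤ d - 1 ∧ (Polynomial.derivative^[m] P).eval y₀ ≠ 0 := by
      by_contra hcon
      push_neg at hcon
      have htay : ∀ i, i ≤ d - 1 → (Polynomial.taylor y₀ P).coeff i = 0 := by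
        intro i hi
        rw [Polynomial.taylor_coeff]
        have h2 : (⇑Polynomial.derivative)^[i] P = i.factorial • (Polynomial.hasseDeriv i) P := by
          rw [← Polynomial.factorial_smul_hasseDeriv i]
          rfl
        have h3 := hcon i hi
        rw [h2, Polynomial.eval_smul, nsmul_eq_mul] at h3
        have hfac : (i.factorial : ℝ) ≠ 0 := Nat.cast_ne_zero.2 (Nat.factorial_ne_zero i)
        exact (mul_eq_zero.1 h3).resolve_left hfac
      set R := Polynomial.taylor y₀ P with hR
      set a := R.coeff d with ha
      have hRdeg : R.natDegree ≤ d := by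
        rw [hR, Polynomial.natDegree_taylor]
        exact hdeg
      have hRC : R = Polynomial.C a * Polynomial.X ^ d := by
        ext m
        rw [Polynomial.coeff_C_mul, Polynomial.coeff_X_pow]
        rcases lt_trichotomy m d with hm | hm | hm
        · rw [if_neg (by omega), mul_zero]
          exact htay m (by omega)
        · rw [if_pos hm, mul_one, ha, hm]
        · rw [if_neg (by omega), mul_zero]
          exact Polynomial.coeff_eq_zero_of_natDegree_lt (lt_of_le_of_lt hRdeg hm)
      have hPfact : P = Polynomial.C a * (Polynomial.X - Polynomial.C y₀) ^ d := by
        have h1 : R = P.comp (Polynomial.X + Polynomial.C y₀) := Polynomial.taylor_apply y₀ P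
        have h2 : (Polynomial.X + Polynomial.C y₀).comp (Polynomial.X - Polynomial.C y₀)
            = Polynomial.X := by
          rw [Polynomial.add_comp, Polynomial.X_comp, Polynomial.C_comp]
          ring
        calc P = P.comp Polynomial.X := (Polynomial.comp_X).symm
          _ = P.comp ((Polynomial.X + Polynomial.C y₀).comp
              (Polynomial.X - Polynomial.C y₀)) := by rw [h2]
          _ = (P.comp (Polynomial.X + Polynomial.C y₀)).comp
              (Polynomial.X - Polynomial.C y₀) := (Polynomial.comp_assoc _ _ _).symm
          _ = R.comp (Polynomial.X - Polynomial.C y₀) := by rw [h1]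
          _ = Polynomial.C a * (Polynomial.X - Polynomial.C y₀) ^ d := by
              rw [hRC, Polynomial.mul_comp, Polynomial.C_comp, Polynomial.pow_comp,
                Polynomial.X_comp]
      have hsub : Polynomial.X - Polynomial.C y₀ = Polynomial.X + Polynomial.C (-y₀) := by
        rw [map_neg]
        ring
      have hcoeff_d : P.coeff d = a := by
        rw [hPfact, Polynomial.coeff_C_mul, hsub, Polynomial.coeff_X_add_C_pow]
        simp
      have had : a = wd := by
        rw [← hcoeff_d, hcoeff d, if_neg (by omega), if_pos rfl, zero_add]
      have ha0 : a ≠ 0 := by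
        rw [had]
        exact hwd0
      have hy0 : y₀ = 0 := by
        have h3 : P.coeff (d - 1) = a * ((-y₀) ^ (d - (d - 1)) * ((d.choose (d - 1)) : ℝ)) := by
          rw [hPfact, Polynomial.coeff_C_mul, hsub, Polynomial.coeff_X_add_C_pow]
        have hd1 : P.coeff (d - 1) = 0 := by
          rw [hcoeff, if_neg (by omega), if_neg (by omega), add_zero]
        rw [hd1] at h3
        have h4 : d - (d - 1) = 1 := by omega
        have h5 : d.choose (d - 1) = d := by
          have h6 : d.choose (d - 1) = d.choose 1 := by
            have := Nat.choose_symm (show 1 ≤ d by omega)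
            simpa using this
          rw [h6, Nat.choose_one_right]
        rw [h4, h5, pow_one] at h3
        have h8 : (-y₀) * (d : ℝ) = 0 := (mul_eq_zero.1 h3.symm).resolve_left ha0
        have hd0 : (d : ℝ) ≠ 0 := Nat.cast_ne_zero.2 (by omega)
        have h9 : -y₀ = 0 := (mul_eq_zero.1 h8).resolve_right hd0
        linarith
      have hkcontr : P.coeff k = 0 := by
        rw [hPfact, hy0, Polynomial.coeff_C_mul]
        simp only [map_zero, sub_zero]
        rw [Polynomial.coeff_X_pow, if_neg (by omega), mul_zero]
      rw [hcoeff k, if_pos hk, if_neg (by omega), add_zero] at hkcontr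
      have hfk : (k.factorial : ℝ) ≠ 0 := Nat.cast_ne_zero.2 (Nat.factorial_ne_zero k)
      exact hk0 (by field_simp at hkcontr; simpa using hkcontr)
    obtain ⟨m₀, hm₀le, hm₀⟩ := hexists
    have hfind : ∃ m, yDeriv H m 0 y₀ ≠ 0 := ⟨m₀, by rw [hyH]; exact hm₀⟩
    refine ⟨Nat.find hfind, le_trans (Nat.find_min' hfind (by rw [hyH]; exact hm₀)) hm₀le,
      Nat.find_spec hfind, fun j hj => not_not.1 (Nat.find_min hfind hj)⟩
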